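/- arXiv:2004.03920 — 2 statements merged into one kernel-verified Lean document; each statement's English description precedes it below -/
import Mathlib

section
/- Fix a real number λ ≠ 0. For every integer n ≥ 1, Σ_{m=1}^{n} B_{m,λ} S_{1,λ}(n,m) = (1)_{n,λ}. -/
open Finset

/-- The degenerate falling factorial `(x)_{n,λ} = x(x−λ)⋯(x−(n−1)λ)`;
for `lam = 1` it is the ordinary falling factorial `(x)_n`. -/
noncomputable def dff (lam : ℝ) (n : ℕ) (x : ℝ) : ℝ :=
  ∏ i ∈ Finset.range n, (x - i * lam)

/-- The degenerate exponential `e_λ^x(t) = Σ_{n≥0} (x)_{n,λ} t^n/n!`. -/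
noncomputable def degExp (lam x : ℝ) : PowerSeries ℝ :=
  PowerSeries.mk fun n => dff lam n x / n.factorial

/-- The degenerate logarithm `log_λ(1+t) = Σ_{n≥1} λ^{n−1}(1)_{n,1/λ} t^n/n!`. -/
noncomputable def degLog (lam : ℝ) : PowerSeries ℝ :=
  PowerSeries.mk fun n =>
    if n = 0 then 0 else lam ^ (n - 1) * dff (1 / lam) n 1 / n.factorial

/-- Composition `f(g(t))` of formal power series (valid definition of composition
when `g` has zero constant term, as in all uses below). -/
noncomputable def pscomp (f g : PowerSeries ℝ) : PowerSeries ℝ :=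
  PowerSeries.mk fun n =>
    ∑ k ∈ Finset.range (n + 1), (PowerSeries.coeff k f) * (PowerSeries.coeff n (g ^ k))

lemma dff_zero (lam x : ℝ) : dff lam 0 x = 1 := by simp [dff]

lemma dff_succ (lam x : ℝ) (n : ℕ) : dff lam (n + 1) x = dff lam n x * (x - n * lam) :=
  Finset.prod_range_succ _ _

lemma dff_at_zero (lam : ℝ) (n : ℕ) (hn : 1 ≤ n) : dff lam n 0 = 0 := by
  apply Finset.prod_eq_zero (i := 0) (by simp; omega)
  simp

lemma dff_one_nat (k N : ℕ) : dff 1 k (N : ℝ) = (N.descFactorial k : ℝ) := by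
  induction k with
  | zero => simp [dff]
  | succ k ih =>
    rw [dff_succ, ih, Nat.descFactorial_succ, Nat.cast_mul]
    by_cases h : k ≤ N
    · rw [Nat.cast_sub h]; ring
    · push_neg at h
      rw [Nat.descFactorial_eq_zero_iff_lt.mpr h]
      simp

lemma dff_add (lam x y : ℝ) (n : ℕ) :
    dff lam n (x + y)
      = ∑ j ∈ range (n + 1), (n.choose j : ℝ) * dff lam j x * dff lam (n - j) y := by
  induction n with
  | zero => simp [dff]
  | succ n ih =>
    have key : ∀ j ∈ range (n + 1),
        (n.choose j : ℝ) * dff lam j x * dff lam (n - j) y * (x + y - n * lam)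
          = (n.choose j : ℝ) * dff lam (j + 1) x * dff lam (n - j) y
            + (n.choose j : ℝ) * dff lam j x * dff lam (n - j + 1) y := by
      intro j hj
      rw [mem_range] at hj
      have hc : ((n - j : ℕ) : ℝ) = (n : ℝ) - (j : ℝ) := by
        rw [Nat.cast_sub (by omega)]
      rw [dff_succ lam x j, dff_succ lam y (n - j), hc]
      ring
    rw [dff_succ, ih, Finset.sum_mul, Finset.sum_congr rfl key, Finset.sum_add_distrib]
    -- target sum
    rw [Finset.sum_range_succ' (fun i => ((n+1).choose i : ℝ) * dff lam i x * dff lam (n+1-i) y)]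
    have pascal : ∀ j ∈ range (n + 1),
        ((n+1).choose (j+1) : ℝ) * dff lam (j+1) x * dff lam (n+1-(j+1)) y
          = (n.choose j : ℝ) * dff lam (j+1) x * dff lam (n-j) y
            + (n.choose (j+1) : ℝ) * dff lam (j+1) x * dff lam (n-j) y := by
      intro j hj
      have : (n+1).choose (j+1) = n.choose j + n.choose (j+1) := Nat.choose_succ_succ n j
      rw [this]
      push_cast
      ring
    rw [Finset.sum_congr rfl pascal, Finset.sum_add_distrib]
    have h2 : ∑ j ∈ range (n + 1), (n.choose (j+1) : ℝ) * dff lam (j+1) x * dff lam (n-j) y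
        + (((n+1).choose 0 : ℝ) * dff lam 0 x * dff lam (n+1-0) y)
        = ∑ j ∈ range (n + 1), (n.choose j : ℝ) * dff lam j x * dff lam (n - j + 1) y := by
      rw [Finset.sum_range_succ' (fun j => (n.choose j : ℝ) * dff lam j x * dff lam (n - j + 1) y)]
      congr 1
      · rw [Finset.sum_range_succ]
        simp only [Nat.choose_succ_self, Nat.cast_zero, zero_mul]
        rw [add_zero]
        apply Finset.sum_congr rfl
        intro j hj
        rw [mem_range] at hj
        have : n - (j + 1) + 1 = n - j := by omega
        rw [this]
      · simp [dff_zero]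
    rw [← h2]
    ring

lemma degExp_mul (lam x y : ℝ) : degExp lam x * degExp lam y = degExp lam (x + y) := by
  ext n
  rw [PowerSeries.coeff_mul]
  rw [Finset.Nat.sum_antidiagonal_eq_sum_range_succ_mk]
  simp only [degExp, PowerSeries.coeff_mk]
  rw [dff_add, Finset.sum_div]
  apply Finset.sum_congr rfl
  intro j hj
  rw [mem_range] at hj
  rw [Nat.cast_choose ℝ (by omega : j ≤ n)]
  have h1 : (j.factorial : ℝ) ≠ 0 := Nat.cast_ne_zero.mpr j.factorial_ne_zero
  have h2 : ((n - j).factorial : ℝ) ≠ 0 := Nat.cast_ne_zero.mpr (n - j).factorial_ne_zero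
  have h3 : (n.factorial : ℝ) ≠ 0 := Nat.cast_ne_zero.mpr n.factorial_ne_zero
  field_simp

lemma degExp_zero (lam : ℝ) : degExp lam 0 = 1 := by
  ext n
  simp only [degExp, PowerSeries.coeff_mk, PowerSeries.coeff_one]
  cases n with
  | zero => simp [dff_zero]
  | succ n => simp [dff_at_zero lam (n + 1) (by omega)]

lemma degExp_pow (lam : ℝ) (N : ℕ) : degExp lam (N : ℝ) = (degExp lam 1) ^ N := by
  induction N with
  | zero => simpa using degExp_zero lam
  | succ N ih =>
    rw [pow_succ, ← ih, degExp_mul]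
    push_cast
    ring_nf

lemma coeff_g_pow_lt (lam : ℝ) (m k : ℕ) (h : m < k) :
    PowerSeries.coeff m ((degExp lam 1 - 1) ^ k) = 0 := by
  have hX : (PowerSeries.X : PowerSeries ℝ) ∣ (degExp lam 1 - 1) := by
    rw [PowerSeries.X_dvd_iff]
    simp [degExp, dff_zero]
  obtain ⟨q, hq⟩ := hX
  rw [hq, mul_pow, PowerSeries.coeff_X_pow_mul', if_neg (by omega)]

lemma lemE (lam : ℝ) (m N : ℕ) :
    dff lam m (N : ℝ) / m.factorial
      = ∑ k ∈ range (m + 1),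
          (N.choose k : ℝ) * PowerSeries.coeff m ((degExp lam 1 - 1) ^ k) := by
  have h0 : dff lam m (N : ℝ) / m.factorial = PowerSeries.coeff m (degExp lam (N : ℝ)) := by
    simp [degExp]
  rw [h0, degExp_pow]
  have h1 : degExp lam 1 = (degExp lam 1 - 1) + 1 := by ring
  rw [h1, add_pow]
  rw [map_sum]
  simp only [one_pow, mul_one]
  have h2 : ∀ k, PowerSeries.coeff m ((degExp lam 1 - 1) ^ k * (↑(N.choose k) : PowerSeries ℝ))
      = (N.choose k : ℝ) * PowerSeries.coeff m ((degExp lam 1 - 1) ^ k) := by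
    intro k
    rw [← map_natCast (PowerSeries.C (R := ℝ)) (N.choose k), PowerSeries.coeff_mul_C]
    ring
  simp only [h2]
  set a : ℕ → ℝ := fun k => (N.choose k : ℝ) * PowerSeries.coeff m ((degExp lam 1 - 1) ^ k) with ha
  have e1 : ∑ k ∈ range (N + 1), a k = ∑ k ∈ range (max N m + 1), a k := by
    apply Finset.sum_subset (Finset.range_subset_range.mpr (by omega))
    intro k hk hk'
    rw [mem_range] at hk hk'
    have : N < k := by omega
    simp [ha, Nat.choose_eq_zero_of_lt this]
  have e2 : ∑ k ∈ range (m + 1), a k = ∑ k ∈ range (max N m + 1), a k := by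
    apply Finset.sum_subset (Finset.range_subset_range.mpr (by omega))
    intro k hk hk'
    rw [mem_range] at hk hk'
    have : m < k := by omega
    simp [ha, coeff_g_pow_lt lam m k this]
  rw [e1, ← e2]
  simp only [add_sub_cancel_right]
  rfl

lemma triangular (n : ℕ) (V : ℕ → ℝ)
    (hV : ∀ j : ℕ, (j.descFactorial n : ℝ)
        = ∑ k ∈ range (n + 1), V k * (j.descFactorial k : ℝ)) :
    ∀ j ≤ n, V j = if j = n then 1 else 0 := by
  intro j
  induction j using Nat.strong_induction_on with
  | _ j ih =>
    intro hjn
    have h := hV j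
    have hsum : ∑ k ∈ range (n + 1), V k * (j.descFactorial k : ℝ)
        = V j * (j.descFactorial j : ℝ) := by
      apply Finset.sum_eq_single j
      · intro k hk hkj
        rw [mem_range] at hk
        rcases lt_or_gt_of_ne hkj with hlt | hgt
        · rw [ih k hlt (by omega), if_neg (by omega), zero_mul]
        · rw [Nat.descFactorial_eq_zero_iff_lt.mpr hgt]
          simp
      · intro hj
        exact absurd (mem_range.mpr (by omega)) hj
    rw [hsum, Nat.descFactorial_self] at h
    have hfac : (j.factorial : ℝ) ≠ 0 := Nat.cast_ne_zero.mpr j.factorial_ne_zero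
    by_cases hje : j = n
    · subst hje
      rw [Nat.descFactorial_self] at h
      rw [if_pos rfl]
      field_simp at h
      linarith [h]
    · rw [if_neg hje]
      rw [Nat.descFactorial_eq_zero_iff_lt.mpr (by omega), Nat.cast_zero] at h
      have := h.symm
      rcases mul_eq_zero.mp this with h' | h'
      · exact h'
      · exact absurd h' hfac

lemma dffE (lam : ℝ) (m N : ℕ) :
    dff lam m (N : ℝ) = m.factorial *
      ∑ k ∈ range (m + 1), (N.choose k : ℝ) * PowerSeries.coeff m ((degExp lam 1 - 1) ^ k) := by
  have h := lemE lam m N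
  have hfac : (m.factorial : ℝ) ≠ 0 := Nat.cast_ne_zero.mpr m.factorial_ne_zero
  field_simp at h
  rw [h]

lemma key_lemma (lam : ℝ) (S1 : ℕ → ℕ → ℝ) (n : ℕ)
    (hS1n : ∀ x : ℝ, dff 1 n x = ∑ l ∈ range (n + 1), S1 n l * dff lam l x)
    (j : ℕ) :
    (j.descFactorial n : ℝ) = ∑ k ∈ range (n + 1),
      ((∑ m ∈ range (n + 1), S1 n m * m.factorial
          * PowerSeries.coeff m ((degExp lam 1 - 1) ^ k)) / k.factorial)
        * (j.descFactorial k : ℝ) := by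
  have h1 : (j.descFactorial n : ℝ) = dff 1 n (j : ℝ) := (dff_one_nat n j).symm
  rw [h1, hS1n (j : ℝ)]
  have h2 : ∀ m ∈ range (n + 1), S1 n m * dff lam m (j : ℝ)
      = ∑ k ∈ range (n + 1),
          S1 n m * m.factorial * ((j.choose k : ℝ)
            * PowerSeries.coeff m ((degExp lam 1 - 1) ^ k)) := by
    intro m hm
    rw [mem_range] at hm
    rw [dffE lam m j]
    have hsub : ∑ k ∈ range (m + 1), (j.choose k : ℝ)
          * PowerSeries.coeff m ((degExp lam 1 - 1) ^ k)
        = ∑ k ∈ range (n + 1), (j.choose k : ℝ)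
          * PowerSeries.coeff m ((degExp lam 1 - 1) ^ k) := by
      apply Finset.sum_subset (Finset.range_subset_range.mpr (by omega))
      intro k hk hk'
      rw [mem_range] at hk hk'
      rw [coeff_g_pow_lt lam m k (by omega)]
      ring
    rw [hsub, Finset.mul_sum, Finset.mul_sum]
    apply Finset.sum_congr rfl
    intro k _
    ring
  rw [Finset.sum_congr rfl h2, Finset.sum_comm]
  apply Finset.sum_congr rfl
  intro k hk
  have hfac : (k.factorial : ℝ) ≠ 0 := Nat.cast_ne_zero.mpr k.factorial_ne_zero
  have hdf : (j.descFactorial k : ℝ) = (k.factorial : ℝ) * (j.choose k : ℝ) := by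
    rw [Nat.descFactorial_eq_factorial_mul_choose]
    push_cast
    ring
  rw [hdf]
  have hcancel : (∑ m ∈ range (n + 1), S1 n m * m.factorial
        * PowerSeries.coeff m ((degExp lam 1 - 1) ^ k)) / k.factorial
        * ((k.factorial : ℝ) * (j.choose k : ℝ))
      = (∑ m ∈ range (n + 1), S1 n m * m.factorial
        * PowerSeries.coeff m ((degExp lam 1 - 1) ^ k)) * (j.choose k : ℝ) := by
    field_simp
  rw [hcancel, Finset.sum_mul]
  apply Finset.sum_congr rfl
  intro m _
  ring


theorem bell_stirling1_sum (lam : ℝ) (hlam : lam ≠ 0)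
    (S1 : ℕ → ℕ → ℝ) (B : ℕ → ℝ → ℝ)
    (hS1 : ∀ (n : ℕ) (x : ℝ), dff 1 n x = ∑ l ∈ Finset.range (n + 1), S1 n l * dff lam l x)
    (hB : ∀ x : ℝ, pscomp (degExp lam x) (degExp lam 1 - 1) = PowerSeries.mk (fun n => B n x / n.factorial))
    : ∀ n : ℕ, 1 ≤ n → ∑ m ∈ Finset.Icc 1 n, B m 1 * S1 n m = dff lam n 1 := by
  intro n hn
  have hfac : ∀ k : ℕ, (k.factorial : ℝ) ≠ 0 :=
    fun k => Nat.cast_ne_zero.mpr k.factorial_ne_zero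
  have hU := triangular n
    (fun k => (∑ m ∈ range (n + 1), S1 n m * m.factorial
        * PowerSeries.coeff m ((degExp lam 1 - 1) ^ k)) / k.factorial)
    (key_lemma lam S1 n (hS1 n))
  have hUk : ∀ k ≤ n, (∑ m ∈ range (n + 1), S1 n m * m.factorial
        * PowerSeries.coeff m ((degExp lam 1 - 1) ^ k))
      = if k = n then (k.factorial : ℝ) else 0 := by
    intro k hk
    have h := hU k hk
    rw [div_eq_iff (hfac k)] at h
    rw [h]
    by_cases hkn : k = n
    · rw [if_pos hkn, if_pos hkn, one_mul]
    · rw [if_neg hkn, if_neg hkn, zero_mul]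
  have hB1 : ∀ m : ℕ, B m 1 = m.factorial * ∑ k ∈ range (m + 1),
      dff lam k 1 / k.factorial * PowerSeries.coeff m ((degExp lam 1 - 1) ^ k) := by
    intro m
    have h := congrArg (PowerSeries.coeff m) (hB 1)
    simp only [pscomp, PowerSeries.coeff_mk] at h
    have h2 : ∀ k ∈ range (m + 1),
        PowerSeries.coeff k (degExp lam 1) * PowerSeries.coeff m ((degExp lam 1 - 1) ^ k)
        = dff lam k 1 / k.factorial * PowerSeries.coeff m ((degExp lam 1 - 1) ^ k) := by
      intro k _
      simp only [degExp, PowerSeries.coeff_mk]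
    rw [Finset.sum_congr rfl h2] at h
    rw [eq_div_iff (hfac m)] at h
    rw [← h]
    ring
  have hS10 : S1 n 0 = 0 := by
    have h := hS1 n 0
    rw [dff_at_zero 1 n hn] at h
    have hsum : ∑ l ∈ range (n + 1), S1 n l * dff lam l 0 = S1 n 0 := by
      rw [Finset.sum_eq_single 0]
      · simp [dff_zero]
      · intro l hl hl0
        rw [dff_at_zero lam l (by omega)]
        ring
      · intro h0
        exact absurd (mem_range.mpr (by omega)) h0
    rw [hsum] at h
    exact h.symm
  have hmain : ∑ m ∈ range (n + 1), B m 1 * S1 n m = dff lam n 1 := by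
    calc ∑ m ∈ range (n + 1), B m 1 * S1 n m
        = ∑ m ∈ range (n + 1), ∑ k ∈ range (n + 1),
            dff lam k 1 / k.factorial
              * (S1 n m * m.factorial * PowerSeries.coeff m ((degExp lam 1 - 1) ^ k)) := by
          apply Finset.sum_congr rfl
          intro m hm
          rw [mem_range] at hm
          rw [hB1 m]
          have hsub : ∑ k ∈ range (m + 1),
                dff lam k 1 / k.factorial * PowerSeries.coeff m ((degExp lam 1 - 1) ^ k)
              = ∑ k ∈ range (n + 1),
                dff lam k 1 / k.factorial * PowerSeries.coeff m ((degExp lam 1 - 1) ^ k) := by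
            apply Finset.sum_subset (Finset.range_subset_range.mpr (by omega))
            intro k hk hk'
            rw [mem_range] at hk hk'
            rw [coeff_g_pow_lt lam m k (by omega)]
            ring
          rw [hsub, Finset.mul_sum, Finset.sum_mul]
          apply Finset.sum_congr rfl
          intro k _
          ring
      _ = ∑ k ∈ range (n + 1), dff lam k 1 / k.factorial *
            ∑ m ∈ range (n + 1), S1 n m * m.factorial
              * PowerSeries.coeff m ((degExp lam 1 - 1) ^ k) := by
          rw [Finset.sum_comm]
          apply Finset.sum_congr rfl
          intro k _
          rw [Finset.mul_sum]
      _ = dff lam n 1 := by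
          have hre : ∀ k ∈ range (n + 1), dff lam k 1 / k.factorial *
              (∑ m ∈ range (n + 1), S1 n m * m.factorial
                * PowerSeries.coeff m ((degExp lam 1 - 1) ^ k))
              = if k = n then dff lam n 1 else 0 := by
            intro k hk
            rw [mem_range] at hk
            rw [hUk k (by omega)]
            by_cases hkn : k = n
            · subst hkn
              rw [if_pos rfl, if_pos rfl]
              field_simp
            · rw [if_neg hkn, if_neg hkn, mul_zero]
          rw [Finset.sum_congr rfl hre,
            Finset.sum_ite_eq' (range (n + 1)) n (fun _ => dff lam n 1)]
          rw [if_pos (mem_range.mpr (by omega))]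
  have hins : range (n + 1) = insert 0 (Finset.Icc 1 n) := by
    ext a
    simp only [Finset.mem_insert, Finset.mem_Icc, Finset.mem_range]
    omega
  have h0notin : (0 : ℕ) ∉ Finset.Icc 1 n := by simp
  rw [hins, Finset.sum_insert h0notin, hS10, mul_zero, zero_add] at hmain
  exact hmain
end

section
/- Fix a real number λ ≠ 0. For every integer n ≥ 0, the polynomial identity Σ_{l=0}^{n} S_{1,λ}(n,l)(x)_l = Σ_{k=0}^{n} S^{(1)}_{J,λ}(n,k)(x)_{k,λ} holds (as an identity of polynomials in the variable x). -/
open Finset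

lemma coeff_pscomp (f g : PowerSeries ℝ) (n : ℕ) :
    PowerSeries.coeff n (pscomp f g) =
      ∑ k ∈ Finset.range (n + 1), PowerSeries.coeff k f * PowerSeries.coeff n (g ^ k) := by
  simp [pscomp]

lemma coeff_pow_eq_zero {g : PowerSeries ℝ} (hg : PowerSeries.constantCoeff g = 0)
    {n k : ℕ} (h : n < k) : PowerSeries.coeff n (g ^ k) = 0 := by
  have hd : (PowerSeries.X : PowerSeries ℝ) ^ k ∣ g ^ k :=
    pow_dvd_pow_of_dvd (PowerSeries.X_dvd_iff.mpr hg) k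
  exact (PowerSeries.X_pow_dvd_iff.mp hd) n h

lemma coeff_pscomp' {g : PowerSeries ℝ} (hg : PowerSeries.constantCoeff g = 0)
    (f : PowerSeries ℝ) {m n : ℕ} (hmn : m ≤ n) :
    PowerSeries.coeff m (pscomp f g) =
      ∑ k ∈ Finset.range (n + 1), PowerSeries.coeff k f * PowerSeries.coeff m (g ^ k) := by
  rw [coeff_pscomp]
  refine Finset.sum_subset (Finset.range_subset_range.mpr (by omega)) fun k hk hk' => ?_
  have : m < k := by simp only [Finset.mem_range] at hk hk'; omega
  rw [coeff_pow_eq_zero hg this, mul_zero]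

lemma pscomp_mul {g : PowerSeries ℝ} (hg : PowerSeries.constantCoeff g = 0)
    (f₁ f₂ : PowerSeries ℝ) :
    pscomp (f₁ * f₂) g = pscomp f₁ g * pscomp f₂ g := by
  ext n
  set G : ℕ × ℕ → ℝ := fun p =>
    PowerSeries.coeff p.1 f₁ * PowerSeries.coeff p.2 f₂ *
      PowerSeries.coeff n (g ^ (p.1 + p.2)) with hG
  have hGzero : ∀ p : ℕ × ℕ, n < p.1 + p.2 → G p = 0 := by
    intro p hp; simp [hG, coeff_pow_eq_zero hg hp]
  have hL : PowerSeries.coeff n (pscomp (f₁ * f₂) g)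
      = ∑ p ∈ Finset.range (n+1) ×ˢ Finset.range (n+1), G p := by
    rw [coeff_pscomp]
    have h1 : PowerSeries.coeff n (pscomp (f₁ * f₂) g)
        = ∑ k ∈ Finset.range (n+1), ∑ p ∈ Finset.HasAntidiagonal.antidiagonal k, G p := by
      rw [coeff_pscomp]
      refine Finset.sum_congr rfl fun k hk => ?_
      rw [PowerSeries.coeff_mul, Finset.sum_mul]
      refine Finset.sum_congr rfl fun p hp => ?_
      rw [Finset.HasAntidiagonal.mem_antidiagonal] at hp
      simp [hG, hp]
    rw [← coeff_pscomp, h1]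
    have hdisj : (↑(Finset.range (n+1)) : Set ℕ).PairwiseDisjoint Finset.HasAntidiagonal.antidiagonal := by
      intro i _ j _ hij
      refine Finset.disjoint_left.mpr fun p hpi hpj => hij ?_
      rw [← Finset.HasAntidiagonal.mem_antidiagonal.mp hpi, ← Finset.HasAntidiagonal.mem_antidiagonal.mp hpj]
    rw [← Finset.sum_biUnion hdisj]
    refine Finset.sum_subset ?_ ?_
    · intro p hp
      simp only [Finset.mem_biUnion, Finset.mem_range, Finset.HasAntidiagonal.mem_antidiagonal] at hp
      obtain ⟨k, hk, rfl⟩ := hp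
      simp only [Finset.mem_product, Finset.mem_range]
      omega
    · intro p hp hp'
      refine hGzero p ?_
      by_contra hle
      push_neg at hle
      exact hp' (Finset.mem_biUnion.mpr ⟨p.1 + p.2, Finset.mem_range.mpr (by omega),
        Finset.HasAntidiagonal.mem_antidiagonal.mpr rfl⟩)
  have hR : PowerSeries.coeff n (pscomp f₁ g * pscomp f₂ g)
      = ∑ p ∈ Finset.range (n+1) ×ˢ Finset.range (n+1), G p := by
    rw [PowerSeries.coeff_mul]
    have h2 : ∀ p ∈ Finset.HasAntidiagonal.antidiagonal n,
        PowerSeries.coeff p.1 (pscomp f₁ g) * PowerSeries.coeff p.2 (pscomp f₂ g)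
        = ∑ a ∈ Finset.range (n+1), ∑ b ∈ Finset.range (n+1),
            (PowerSeries.coeff a f₁ * PowerSeries.coeff p.1 (g ^ a)) *
            (PowerSeries.coeff b f₂ * PowerSeries.coeff p.2 (g ^ b)) := by
      intro p hp
      rw [Finset.HasAntidiagonal.mem_antidiagonal] at hp
      rw [coeff_pscomp' hg f₁ (show p.1 ≤ n by omega),
        coeff_pscomp' hg f₂ (show p.2 ≤ n by omega), Finset.sum_mul_sum]
    rw [Finset.sum_congr rfl h2, Finset.sum_comm]
    rw [Finset.sum_product]
    refine Finset.sum_congr rfl fun a _ => ?_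
    rw [Finset.sum_comm]
    refine Finset.sum_congr rfl fun b _ => ?_
    have : ∑ p ∈ Finset.HasAntidiagonal.antidiagonal n,
        (PowerSeries.coeff a f₁ * PowerSeries.coeff p.1 (g ^ a)) *
        (PowerSeries.coeff b f₂ * PowerSeries.coeff p.2 (g ^ b))
        = PowerSeries.coeff a f₁ * PowerSeries.coeff b f₂ *
          ∑ p ∈ Finset.HasAntidiagonal.antidiagonal n,
            PowerSeries.coeff p.1 (g ^ a) * PowerSeries.coeff p.2 (g ^ b) := by
      rw [Finset.mul_sum]; refine Finset.sum_congr rfl fun p _ => by ring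
    rw [this, ← PowerSeries.coeff_mul, ← pow_add]
  rw [hL, hR]

lemma pscomp_one (g : PowerSeries ℝ) : pscomp 1 g = 1 := by
  ext n
  rw [coeff_pscomp]
  rw [Finset.sum_eq_single 0]
  · simp
  · intro k hk hk0
    simp [PowerSeries.coeff_one, hk0]
  · simp
lemma pscomp_pow {g : PowerSeries ℝ} (hg : PowerSeries.constantCoeff g = 0)
    (f : PowerSeries ℝ) (m : ℕ) : pscomp (f ^ m) g = (pscomp f g) ^ m := by
  induction m with
  | zero => simpa using pscomp_one g
  | succ m ih => rw [pow_succ, pscomp_mul hg, ih, pow_succ]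

lemma pscomp_add (f₁ f₂ g : PowerSeries ℝ) :
    pscomp (f₁ + f₂) g = pscomp f₁ g + pscomp f₂ g := by
  ext n
  simp [coeff_pscomp, add_mul, Finset.sum_add_distrib]

lemma pscomp_X {g : PowerSeries ℝ} (hg : PowerSeries.constantCoeff g = 0) :
    pscomp PowerSeries.X g = g := by
  ext n
  rw [coeff_pscomp]
  rw [Finset.sum_eq_single 1]
  · simp
  · intro k hk hk1
    simp [PowerSeries.coeff_X, hk1]
  · intro h
    simp only [Finset.mem_range, not_lt] at h
    have hn : n = 0 := by omega
    subst hn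
    rw [← PowerSeries.coeff_zero_eq_constantCoeff_apply] at hg
    simp [hg]

lemma pscomp_C_mul (c : ℝ) (f g : PowerSeries ℝ) :
    pscomp (PowerSeries.C c * f) g = PowerSeries.C c * pscomp f g := by
  ext n
  simp [coeff_pscomp, PowerSeries.coeff_C_mul, Finset.mul_sum, mul_assoc]

lemma pscomp_one_add_X_pow {g : PowerSeries ℝ} (hg : PowerSeries.constantCoeff g = 0) (m : ℕ) :
    pscomp ((1 + PowerSeries.X) ^ m) g = (1 + g) ^ m := by
  rw [pscomp_pow hg, pscomp_add, pscomp_one, pscomp_X hg]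

lemma dff_vandermonde (lam : ℝ) : ∀ (n : ℕ) (x y : ℝ),
    ∑ k ∈ Finset.range (n + 1), (n.choose k : ℝ) * dff lam k x * dff lam (n - k) y
      = dff lam n (x + y) := by
  intro n
  induction n with
  | zero => intro x y; simp [dff]
  | succ n ih =>
    intro x y
    set g : ℕ → ℝ := fun j => ((n.choose j : ℕ) : ℝ) * dff lam j x * dff lam (n + 1 - j) y
      with hgdef
    have hsplit : ∑ k ∈ Finset.range (n + 2),
        ((n+1).choose k : ℝ) * dff lam k x * dff lam (n + 1 - k) y
        = (∑ k ∈ Finset.range (n + 1),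
            (n.choose k : ℝ) * dff lam k x * (x - k * lam) * dff lam (n - k) y)
          + ∑ j ∈ Finset.range (n + 1), g j := by
      rw [Finset.sum_range_succ' _ (n+1)]
      have hterm : ∀ k ∈ Finset.range (n + 1),
          ((n+1).choose (k+1) : ℝ) * dff lam (k+1) x * dff lam (n + 1 - (k+1)) y
          = ((n.choose k : ℝ) * dff lam k x * (x - k * lam) * dff lam (n - k) y) + g (k+1) := by
        intro k hk
        have h1 : n + 1 - (k + 1) = n - k := by omega
        simp only [hgdef, h1, Nat.choose_succ_succ, Nat.cast_add, dff_succ]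
        ring
      rw [Finset.sum_congr rfl hterm, Finset.sum_add_distrib]
      have hg0 : ((n+1).choose 0 : ℝ) * dff lam 0 x * dff lam (n + 1 - 0) y = g 0 := by
        simp [hgdef]
      have hlast : ∑ k ∈ Finset.range (n + 1), g (k + 1)
          = (∑ j ∈ Finset.range (n + 1), g j) - g 0 := by
        have : ∑ j ∈ Finset.range (n + 2), g j
            = (∑ k ∈ Finset.range (n + 1), g (k + 1)) + g 0 := Finset.sum_range_succ' g (n+1)
        have hgn1 : g (n + 1) = 0 := by simp [hgdef, Nat.choose_succ_self]
        rw [Finset.sum_range_succ, hgn1, add_zero] at this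
        linarith
      rw [hlast, hg0]
      ring
    rw [hsplit]
    have hgval : ∀ j ∈ Finset.range (n + 1),
        g j = (n.choose j : ℝ) * dff lam j x * dff lam (n - j) y * (y - (n - j : ℕ) * lam) := by
      intro j hj
      rw [Finset.mem_range] at hj
      have : n + 1 - j = (n - j) + 1 := by omega
      rw [hgdef]; simp only [this, dff_succ]; ring
    rw [Finset.sum_congr rfl hgval]
    have hcomb : ∀ k ∈ Finset.range (n + 1),
        (n.choose k : ℝ) * dff lam k x * (x - k * lam) * dff lam (n - k) y
          + (n.choose k : ℝ) * dff lam k x * dff lam (n - k) y * (y - (n - k : ℕ) * lam)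
        = ((n.choose k : ℝ) * dff lam k x * dff lam (n - k) y) * (x + y - n * lam) := by
      intro k hk
      rw [Finset.mem_range] at hk
      have hcast : ((n - k : ℕ) : ℝ) = (n : ℝ) - (k : ℝ) := by
        rw [Nat.cast_sub (by omega)]
      rw [hcast]; ring
    rw [← Finset.sum_add_distrib, Finset.sum_congr rfl hcomb, ← Finset.sum_mul, ih x y,
      dff_succ]

lemma coeff_degExp (lam x : ℝ) (n : ℕ) :
    PowerSeries.coeff n (degExp lam x) = dff lam n x / n.factorial := by
  simp [degExp]

lemma degExp_pow_s7 (b : ℝ) (m : ℕ) : (degExp 1 b) ^ m = degExp 1 (m * b) := by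
  induction m with
  | zero => simp [degExp_zero]
  | succ m ih =>
    rw [pow_succ, ih, degExp_mul]
    norm_num
    ring_nf

lemma dff_descPoch (n : ℕ) (x : ℝ) : dff 1 n x = (descPochhammer ℝ n).eval x := by
  induction n with
  | zero => simp [dff]
  | succ n ih => rw [dff_succ, descPochhammer_succ_eval, ih]; norm_num

lemma dff_one_nat_s7 (n m : ℕ) : dff 1 n (m : ℝ) = (m.descFactorial n : ℝ) := by
  rw [dff_descPoch, descPochhammer_eval_eq_descFactorial]

lemma degExp_one_nat (m : ℕ) :
    degExp 1 (m : ℝ) = (1 + PowerSeries.X) ^ m := by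
  ext n
  rw [coeff_degExp, dff_one_nat_s7, Nat.descFactorial_eq_factorial_mul_choose]
  have h3 : (n.factorial : ℝ) ≠ 0 := Nat.cast_ne_zero.mpr n.factorial_ne_zero
  have hlhs : ((n.factorial * m.choose n : ℕ) : ℝ) / (n.factorial : ℝ) = (m.choose n : ℝ) := by
    push_cast; field_simp
  rw [hlhs, add_comm (1 : PowerSeries ℝ) PowerSeries.X, add_pow]
  rw [map_sum]
  rw [Finset.sum_eq_single n]
  · rw [one_pow, mul_one, ← map_natCast (PowerSeries.C), PowerSeries.coeff_mul_C,
      PowerSeries.coeff_X_pow]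
    simp
  · intro k hk hkn
    rw [one_pow, mul_one, ← map_natCast (PowerSeries.C), PowerSeries.coeff_mul_C,
      PowerSeries.coeff_X_pow]
    simp [Ne.symm hkn]
  · intro hn
    simp only [Finset.mem_range, not_lt] at hn
    rw [Nat.choose_eq_zero_of_lt (by omega)]
    simp

lemma constantCoeff_degExp_sub_one (b : ℝ) :
    PowerSeries.constantCoeff (degExp 1 b - 1) = 0 := by
  rw [← PowerSeries.coeff_zero_eq_constantCoeff_apply, map_sub, coeff_degExp]
  simp [dff_zero]

lemma lemmaB (b : ℝ) (n : ℕ) (a : ℝ) :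
    ∑ k ∈ Finset.range (n + 1), dff 1 k a / k.factorial *
        PowerSeries.coeff n ((degExp 1 b - 1) ^ k)
      = dff 1 n (a * b) / n.factorial := by
  set g : PowerSeries ℝ := degExp 1 b - 1 with hgdef
  have hg : PowerSeries.constantCoeff g = 0 := constantCoeff_degExp_sub_one b
  set p : Polynomial ℝ := ∑ k ∈ Finset.range (n + 1),
      Polynomial.C (PowerSeries.coeff n (g ^ k) / k.factorial) * descPochhammer ℝ k with hpdef
  set q : Polynomial ℝ := Polynomial.C ((n.factorial : ℝ))⁻¹ *
      ∏ i ∈ Finset.range n, (Polynomial.C b * Polynomial.X - Polynomial.C (i : ℝ)) with hqdef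
  have evp : ∀ x : ℝ, p.eval x = ∑ k ∈ Finset.range (n + 1),
      dff 1 k x / k.factorial * PowerSeries.coeff n (g ^ k) := by
    intro x
    rw [hpdef, Polynomial.eval_finset_sum]
    refine Finset.sum_congr rfl fun k _ => ?_
    rw [Polynomial.eval_mul, Polynomial.eval_C, ← dff_descPoch]
    ring
  have evq : ∀ x : ℝ, q.eval x = dff 1 n (x * b) / n.factorial := by
    intro x
    rw [hqdef, Polynomial.eval_mul, Polynomial.eval_C, Polynomial.eval_prod]
    have : ∀ i ∈ Finset.range n,
        (Polynomial.C b * Polynomial.X - Polynomial.C (i:ℝ)).eval x = x * b - i * 1 := by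
      intro i _; simp; ring
    rw [Finset.prod_congr rfl this]
    rw [dff]
    field_simp
  have key : ∀ m : ℕ, p.eval (m : ℝ) = q.eval (m : ℝ) := by
    intro m
    rw [evp, evq]
    have h1 : ∑ k ∈ Finset.range (n + 1),
        dff 1 k (m : ℝ) / k.factorial * PowerSeries.coeff n (g ^ k)
        = PowerSeries.coeff n (pscomp (degExp 1 (m : ℝ)) g) := by
      rw [coeff_pscomp]
      exact Finset.sum_congr rfl fun k _ => by rw [coeff_degExp]
    rw [h1, degExp_one_nat, pscomp_one_add_X_pow hg, hgdef, add_sub_cancel, degExp_pow_s7,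
      coeff_degExp]
  have hpq : p = q := by
    apply Polynomial.eq_of_infinite_eval_eq
    apply Set.Infinite.mono (s := Set.range ((↑) : ℕ → ℝ))
    · rintro _ ⟨m, rfl⟩; exact key m
    · exact Set.infinite_range_of_injective Nat.cast_injective
  rw [← evp, hpq, evq]

lemma dff_scale {lam : ℝ} (hlam : lam ≠ 0) (n : ℕ) (x : ℝ) :
    dff lam n x = lam ^ n * dff 1 n (x / lam) := by
  rw [dff, dff, ← Finset.card_range n, ← Finset.prod_const, Finset.card_range,
    ← Finset.prod_mul_distrib]
  refine Finset.prod_congr rfl fun i _ => ?_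
  field_simp

lemma constantCoeff_degLog (lam : ℝ) : PowerSeries.constantCoeff (degLog lam) = 0 := by
  rw [← PowerSeries.coeff_zero_eq_constantCoeff_apply]
  simp [degLog]

lemma degLog_eq {lam : ℝ} (hlam : lam ≠ 0) :
    degLog lam = PowerSeries.C lam⁻¹ * (degExp 1 lam - 1) := by
  ext n
  rw [PowerSeries.coeff_C_mul, map_sub, coeff_degExp]
  cases n with
  | zero =>
    simp [degLog, dff]
  | succ m =>
    have hcoe1 : PowerSeries.coeff (m+1) (1 : PowerSeries ℝ) = 0 := by
      simp [PowerSeries.coeff_one]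
    rw [hcoe1, sub_zero, degLog, PowerSeries.coeff_mk]
    simp only [Nat.succ_ne_zero, if_false, Nat.add_sub_cancel]
    have h1 : (1 : ℝ) / lam ≠ 0 := one_div_ne_zero hlam
    rw [dff_scale h1, one_div_one_div]
    field_simp
    have e : lam * lam ^ m * lam⁻¹ * lam⁻¹ ^ m = 1 := by rw [inv_pow]; field_simp
    linear_combination (dff 1 (m + 1) lam) * e

lemma lemmaA {lam : ℝ} (hlam : lam ≠ 0) (n : ℕ) (x : ℝ) :
    ∑ k ∈ Finset.range (n + 1), dff lam k x / k.factorial *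
        PowerSeries.coeff n ((degLog lam) ^ k)
      = dff 1 n x / n.factorial := by
  have step : ∀ k : ℕ, dff lam k x / k.factorial *
      PowerSeries.coeff n ((degLog lam) ^ k)
      = dff 1 k (x / lam) / k.factorial *
        PowerSeries.coeff n ((degExp 1 lam - 1) ^ k) := by
    intro k
    rw [degLog_eq hlam, mul_pow, ← map_pow, PowerSeries.coeff_C_mul, dff_scale hlam]
    have : lam ^ k * ((lam⁻¹) ^ k) = 1 := by
      rw [← mul_pow, mul_inv_cancel₀ hlam, one_pow]
    field_simp
    linear_combination (dff 1 k (x / lam) * PowerSeries.coeff n ((degExp 1 lam - 1) ^ k)) * this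
  rw [Finset.sum_congr rfl fun k _ => step k, lemmaB lam n (x / lam),
    div_mul_cancel₀ x hlam]

lemma dff_indep {lam : ℝ} (hlam : lam ≠ 0) (N : ℕ) (a : ℕ → ℝ)
    (h : ∀ x : ℝ, ∑ m ∈ Finset.range (N + 1), a m * dff lam m x = 0) :
    ∀ j, j ≤ N → a j = 0 := by
  intro j
  induction j using Nat.strong_induction_on with
  | _ j ih =>
    intro hjN
    have hx := h ((j : ℝ) * lam)
    rw [Finset.sum_eq_single j] at hx
    · have hd : dff lam j ((j : ℝ) * lam) ≠ 0 := by
        rw [dff]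
        refine Finset.prod_ne_zero_iff.mpr fun i hi => ?_
        rw [Finset.mem_range] at hi
        have : ((j : ℝ) - i) ≠ 0 := by
          have : (i : ℝ) ≠ (j : ℝ) := Nat.cast_injective.ne (by omega)
          intro hc; apply this; linarith
        intro hc; apply this
        have : ((j : ℝ) - (i : ℝ)) * lam = 0 := by linarith [hc]; 
        rcases mul_eq_zero.mp this with h' | h'
        · exact h'
        · exact absurd h' hlam
      rcases mul_eq_zero.mp hx with h' | h'
      · exact h'
      · exact absurd h' hd
    · intro m hm hmj
      rw [Finset.mem_range] at hm
      rcases lt_or_gt_of_ne hmj with hlt | hgt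
      · rw [ih m hlt (by omega), zero_mul]
      · have : dff lam m ((j : ℝ) * lam) = 0 := by
          apply Finset.prod_eq_zero (Finset.mem_range.mpr hgt)
          ring
        rw [this, mul_zero]
    · intro hj; exact absurd (Finset.mem_range.mpr (by omega)) hj

theorem stirling1_jindalrae1_polynomial_identity (lam : ℝ) (hlam : lam ≠ 0)
    (S1 SJ1 : ℕ → ℕ → ℝ)
    (hS1 : ∀ (n : ℕ) (x : ℝ), dff 1 n x = ∑ l ∈ Finset.range (n + 1), S1 n l * dff lam l x)
    (hSJ1 : ∀ k : ℕ, (PowerSeries.C ((k.factorial : ℝ))⁻¹) * (pscomp (degLog lam) (degLog lam)) ^ k = PowerSeries.mk (fun n => if k ≤ n then SJ1 n k / n.factorial else 0))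
    : ∀ (n : ℕ) (x : ℝ), ∑ l ∈ Finset.range (n + 1), S1 n l * dff 1 l x = ∑ k ∈ Finset.range (n + 1), SJ1 n k * dff lam k x := by
  set c : ℕ → ℕ → ℝ := fun n k => PowerSeries.coeff n ((degLog lam) ^ k) with hc
  set s : ℕ → ℕ → ℝ := fun n k => (n.factorial : ℝ) / (k.factorial : ℝ) * c n k with hs
  have hfac : ∀ m : ℕ, ((m.factorial : ℕ) : ℝ) ≠ 0 :=
    fun m => Nat.cast_ne_zero.mpr m.factorial_ne_zero
  -- (F1) the generating-function Stirling relation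
  have F1 : ∀ (n : ℕ) (x : ℝ),
      dff 1 n x = ∑ k ∈ Finset.range (n + 1), s n k * dff lam k x := by
    intro n x
    have := lemmaA hlam n x
    have h2 : dff 1 n x = (n.factorial : ℝ) *
        ∑ k ∈ Finset.range (n + 1), dff lam k x / k.factorial * c n k := by
      rw [this]; field_simp
    rw [h2, Finset.mul_sum]
    refine Finset.sum_congr rfl fun k _ => ?_
    rw [hs]
    field_simp
  -- (F3) vanishing above the diagonal
  have F3 : ∀ n k : ℕ, n < k → s n k = 0 := by
    intro n k h
    rw [hs, hc]
    simp only
    rw [coeff_pow_eq_zero (constantCoeff_degLog lam) h, mul_zero]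
  -- (F2) S1 agrees with s
  have F2 : ∀ n l : ℕ, l ≤ n → S1 n l = s n l := by
    intro n l hl
    have h0 : ∀ x : ℝ, ∑ m ∈ Finset.range (n + 1), (S1 n m - s n m) * dff lam m x = 0 := by
      intro x
      have := hS1 n x
      have h2 := F1 n x
      have : ∑ m ∈ Finset.range (n + 1), (S1 n m - s n m) * dff lam m x
          = (∑ m ∈ Finset.range (n + 1), S1 n m * dff lam m x)
            - ∑ m ∈ Finset.range (n + 1), s n m * dff lam m x := by
        rw [← Finset.sum_sub_distrib]
        exact Finset.sum_congr rfl fun m _ => by ring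
      rw [this, ← hS1 n x, ← F1 n x, sub_self]
    have h3 : S1 n l - s n l = 0 := dff_indep hlam n (fun m => S1 n m - s n m) h0 l hl
    linarith
  -- (F4) the Jindalrae-Stirling numbers as convolutions
  have F4 : ∀ n k : ℕ, k ≤ n → SJ1 n k = ∑ m ∈ Finset.range (n + 1), s n m * s m k := by
    intro n k hk
    have h1 := congrArg (PowerSeries.coeff n) (hSJ1 k)
    rw [PowerSeries.coeff_C_mul, PowerSeries.coeff_mk, if_pos hk,
      ← pscomp_pow (constantCoeff_degLog lam), coeff_pscomp] at h1
    -- h1 : (k!)⁻¹ * Σ_m c m k * c n m = SJ1 n k / n!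
    have h2 : SJ1 n k = (n.factorial : ℝ) * ((k.factorial : ℝ))⁻¹ *
        ∑ m ∈ Finset.range (n + 1), c m k * c n m := by
      have := h1
      field_simp at this ⊢
      linarith [this]
    rw [h2, Finset.mul_sum]
    refine Finset.sum_congr rfl fun m _ => ?_
    rw [hs]
    simp only
    field_simp
  -- final assembly
  intro n x
  calc ∑ l ∈ Finset.range (n + 1), S1 n l * dff 1 l x
      = ∑ l ∈ Finset.range (n + 1), s n l *
          ∑ m ∈ Finset.range (n + 1), s l m * dff lam m x := by
        refine Finset.sum_congr rfl fun l hl => ?_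
        rw [Finset.mem_range] at hl
        rw [F2 n l (by omega), F1 l x]
        congr 1
        refine Finset.sum_subset (Finset.range_subset_range.mpr (by omega)) fun m hm hm' => ?_
        rw [Finset.mem_range] at hm hm'
        rw [F3 l m (by omega), zero_mul]
    _ = ∑ m ∈ Finset.range (n + 1),
          (∑ l ∈ Finset.range (n + 1), s n l * s l m) * dff lam m x := by
        rw [Finset.sum_congr rfl (fun l _ => Finset.mul_sum _ _ _), Finset.sum_comm]
        refine Finset.sum_congr rfl fun m _ => ?_
        rw [Finset.sum_mul]
        exact Finset.sum_congr rfl fun l _ => by ring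
    _ = ∑ k ∈ Finset.range (n + 1), SJ1 n k * dff lam k x := by
        refine Finset.sum_congr rfl fun m hm => ?_
        rw [Finset.mem_range] at hm
        rw [F4 n m (by omega)]
end
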